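/- Let M be a compact Riemannian manifold (viewed as a metric space with its Riemannian distance) with diameter at most D, let p ∈ M, and let L, W > 0. Suppose that every closed curve in M of length at most L admits a contraction of width at most W. Then S_p(M, L) ≤ max{2L, 2W + 2D}. -/

import Mathlib

open scoped Manifold Topology
open Set Function ENNReal

/-- The length (total variation) of a curve parametrized on `[0,1]`. -/
noncomputable def loopLen {M : Type*} [PseudoEMetricSpace M] (c : ℝ → M) : ℝ≥0∞ :=
  eVariationOn c (Set.Icc 0 1)

/-- A closed curve in `M`, encoded as a continuous `1`-periodic map `ℝ → M`. -/
def IsLoop {M : Type*} [MetricSpace M] (γ : ℝ → M) : Prop :=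
  Continuous γ ∧ Function.Periodic γ 1

/-- The width of a homotopy `H`, where `H t s` is the position at homotopy-time `s`
of the point of parameter `t`: the supremum over `t ∈ [0,1]` of the length of the
trajectory curve `s ↦ H t s`. -/
noncomputable def homWidth {M : Type*} [PseudoEMetricSpace M] (H : ℝ → ℝ → M) : ℝ≥0∞ :=
  ⨆ t ∈ Set.Icc (0:ℝ) 1, eVariationOn (H t) (Set.Icc 0 1)

/-- A (free) homotopy of closed curves from `γ₁` to `γ₂`. -/
def IsLoopHomotopy {M : Type*} [MetricSpace M] (H : ℝ → ℝ → M) (γ₁ γ₂ : ℝ → M) : Prop :=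
  Continuous (Function.uncurry H) ∧ (∀ s, Function.Periodic (fun t => H t s) 1) ∧
    (∀ t, H t 0 = γ₁ t) ∧ (∀ t, H t 1 = γ₂ t)

/-- A contraction of the closed curve `γ`: a homotopy from `γ` to a constant curve. -/
def IsContraction {M : Type*} [MetricSpace M] (H : ℝ → ℝ → M) (γ : ℝ → M) : Prop :=
  ∃ p : M, IsLoopHomotopy H γ (fun _ => p)

/-- A closed geodesic of length `L` in the metric space `M`: a nonconstant `L`-periodic
curve, parametrized by arclength and locally minimizing. -/
def IsClosedGeodesic {M : Type*} [MetricSpace M] (γ : ℝ → M) (L : ℝ) : Prop :=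
  0 < L ∧ Continuous γ ∧ Function.Periodic γ L ∧ (∃ s t, γ s ≠ γ t) ∧
    ∀ t : ℝ, ∃ ε > 0, ∀ s ∈ Set.Ioo (t - ε) (t + ε), ∀ u ∈ Set.Ioo (t - ε) (t + ε),
      dist (γ s) (γ u) = |s - u|

/-- A good cover of `M` with parameters `(F, G, N)`: open covers `A` (the refinement)
and `B`, each with at most `N` elements. -/
structure GoodCover (M : Type*) [MetricSpace M] (F G : ℝ) (N : ℕ) where
  A : Fin N → Set M
  B : Fin N → Set M
  isOpen_A : ∀ i, IsOpen (A i)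
  isOpen_B : ∀ j, IsOpen (B j)
  cover_A : ⋃ i, A i = Set.univ
  cover_B : ⋃ j, B j = Set.univ
  refines : ∀ i, ∃ j, A i ⊆ B j
  chain_A : ∀ i, ∀ x ∈ A i, ∀ y ∈ A i, ∃ c : ℝ → M,
    ContinuousOn c (Set.Icc 0 1) ∧ c 0 = x ∧ c 1 = y ∧
    Set.MapsTo c (Set.Icc 0 1) (A i) ∧ eVariationOn c (Set.Icc 0 1) ≤ ENNReal.ofReal F
  chain_B : ∀ j, ∀ x ∈ B j, ∀ y ∈ B j, ∃ c : ℝ → M,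
    ContinuousOn c (Set.Icc 0 1) ∧ c 0 = x ∧ c 1 = y ∧
    Set.MapsTo c (Set.Icc 0 1) (B j) ∧ eVariationOn c (Set.Icc 0 1) ≤ ENNReal.ofReal F
  inter_sub : ∀ i i', (A i ∩ A i').Nonempty → ∃ k, A i ∪ A i' ⊆ B k
  contract_B : ∀ j, ∀ γ : ℝ → M, IsLoop γ → (∀ t, γ t ∈ B j) →
    ∃ H : ℝ → ℝ → M, IsContraction H γ ∧ (∀ t, ∀ s ∈ Set.Icc (0:ℝ) 1, H t s ∈ B j) ∧
      homWidth H ≤ ENNReal.ofReal G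

/-- A nerve graph `Σ ⊂ M` associated with a good cover: a choice of vertices `x i ∈ A i`
and, for every pair with `A i ∩ A j ≠ ∅`, an edge curve of length `≤ 2F`
joining `x i` to `x j` inside `A i ∪ A j`. -/
structure NerveGraph {M : Type*} [MetricSpace M] {F G : ℝ} {N : ℕ}
    (GC : GoodCover M F G N) where
  x : Fin N → M
  x_mem : ∀ i, x i ∈ GC.A i
  e : Fin N → Fin N → ℝ → M
  e_symm : ∀ i j s, e j i s = e i j (1 - s)
  e_cont : ∀ i j, (GC.A i ∩ GC.A j).Nonempty → ContinuousOn (e i j) (Set.Icc 0 1)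
  e_src : ∀ i j, (GC.A i ∩ GC.A j).Nonempty → e i j 0 = x i
  e_tgt : ∀ i j, (GC.A i ∩ GC.A j).Nonempty → e i j 1 = x j
  e_mem : ∀ i j, (GC.A i ∩ GC.A j).Nonempty →
    Set.MapsTo (e i j) (Set.Icc 0 1) (GC.A i ∪ GC.A j)
  e_len : ∀ i j, (GC.A i ∩ GC.A j).Nonempty →
    eVariationOn (e i j) (Set.Icc 0 1) ≤ ENNReal.ofReal (2 * F)

/-- `α : [0,1] → M` is a simplicial curve in the nerve graph, of simplicial length `L`:
a concatenation of `L` edge curves, consecutive ones sharing a vertex (for `L = 0`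
it is a constant curve at a vertex). -/
def IsSimplicialCurve {M : Type*} [MetricSpace M] {F G : ℝ} {N : ℕ}
    {GC : GoodCover M F G N} (ng : NerveGraph GC) (α : ℝ → M) (L : ℕ) : Prop :=
  ∃ v : ℕ → Fin N,
    (∀ k < L, (GC.A (v k) ∩ GC.A (v (k+1))).Nonempty) ∧
    (L = 0 → ∀ t ∈ Set.Icc (0:ℝ) 1, α t = ng.x (v 0)) ∧
    (∀ k < L, ∀ s ∈ Set.Icc (0:ℝ) 1, α (((k : ℝ) + s) / L) = ng.e (v k) (v (k+1)) s)

/-- A simplicial loop: a simplicial curve whose initial and final vertices coincide,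
regarded as a `1`-periodic closed curve. -/
def IsSimplicialLoop {M : Type*} [MetricSpace M] {F G : ℝ} {N : ℕ}
    {GC : GoodCover M F G N} (ng : NerveGraph GC) (α : ℝ → M) (L : ℕ) : Prop :=
  Function.Periodic α 1 ∧
  ∃ v : ℕ → Fin N, v L = v 0 ∧
    (∀ k < L, (GC.A (v k) ∩ GC.A (v (k+1))).Nonempty) ∧
    (L = 0 → ∀ t ∈ Set.Icc (0:ℝ) 1, α t = ng.x (v 0)) ∧
    (∀ k < L, ∀ s ∈ Set.Icc (0:ℝ) 1, α (((k : ℝ) + s) / L) = ng.e (v k) (v (k+1)) s)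

/-- A loop based at `p`. -/
def IsBasedLoop {M : Type*} [MetricSpace M] (p : M) (γ : ℝ → M) : Prop :=
  IsLoop γ ∧ γ 0 = p

/-- A based homotopy (through loops based at `p`). -/
def IsBasedHomotopy {M : Type*} [MetricSpace M] (p : M) (H : ℝ → ℝ → M)
    (γ₁ γ₂ : ℝ → M) : Prop :=
  IsLoopHomotopy H γ₁ γ₂ ∧ ∀ s, H 0 s = p

/-- The depth of a loop `γ` based at `p`: the infimum of `S` such that `γ` can be
contracted to the constant loop at `p` through loops of length `≤ length γ + S`. -/
noncomputable def loopDepth {M : Type*} [MetricSpace M] (p : M) (γ : ℝ → M) : ℝ≥0∞ :=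
  ⨅ S ∈ {S : ℝ≥0∞ | ∃ H : ℝ → ℝ → M, IsBasedHomotopy p H γ (fun _ => p) ∧
    ∀ s ∈ Set.Icc (0:ℝ) 1, eVariationOn (fun t => H t s) (Set.Icc 0 1) ≤ loopLen γ + S}, S

/-- `S_p(M, L)`: the supremum of the depths of loops based at `p` of length `≤ L`. -/
noncomputable def depthSup {M : Type*} [MetricSpace M] (p : M) (L : ℝ) : ℝ≥0∞ :=
  ⨆ γ ∈ {γ : ℝ → M | IsBasedLoop p γ ∧ loopLen γ ≤ ENNReal.ofReal L}, loopDepth p γ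

set_option linter.unusedSectionVars false
set_option linter.unusedVariables false

noncomputable section SlitAux

def clampI (s : ℝ) : ℝ := max 0 (min s 1)

@[fun_prop]
theorem clampI_cont : Continuous clampI := by unfold clampI; fun_prop

theorem clampI_mem (s : ℝ) : clampI s ∈ Icc (0:ℝ) 1 :=
  ⟨le_max_left _ _, max_le (by norm_num) (min_le_right _ _)⟩

@[simp] theorem clampI_zero : clampI 0 = 0 := by norm_num [clampI]
@[simp] theorem clampI_one : clampI 1 = 1 := by norm_num [clampI]

variable {M : Type*} [MetricSpace M]

def phA (γ : ℝ → M) (t s : ℝ) : M :=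
  γ ((1 - clampI s) * t + clampI s * min (3*t) 1)

def phB (γ : ℝ → M) (H : ℝ → ℝ → M) (t s : ℝ) : M :=
  if t ≤ 1/3 then γ (3*t) else
    if t ≤ 2/3 then H 0 (clampI s * (3*t-1)) else H 0 (clampI s * (3-3*t))

def phC (γ : ℝ → M) (H : ℝ → ℝ → M) (t s : ℝ) : M :=
  if t ≤ 1/3 then γ ((1 - clampI s) * (3*t)) else
    if t ≤ 2/3 then H (1 - clampI s) (3*t-1) else H 0 (3-3*t)

def phD (H : ℝ → ℝ → M) (p : M) (t s : ℝ) : M :=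
  if t ≤ 1/3 then p else
    if t ≤ 2/3 then H 0 ((1 - clampI s) * (3*t-1)) else H 0 ((1 - clampI s) * (3-3*t))

def bigK (γ : ℝ → M) (H : ℝ → ℝ → M) (p : M) (t s : ℝ) : M :=
  if s ≤ 1/2 then
    (if s ≤ 1/4 then phA γ t (4*s) else phB γ H t (4*s-1))
  else
    (if s ≤ 3/4 then phC γ H t (4*s-2) else phD H p t (4*s-3))

def finK (γ : ℝ → M) (H : ℝ → ℝ → M) (p : M) (t s : ℝ) : M :=
  bigK γ H p (Int.fract t) s

theorem Icc_split (g : ℝ → M) {a b c : ℝ} (hab : a ≤ b) (hbc : b ≤ c) :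
    eVariationOn g (Icc a c) = eVariationOn g (Icc a b) + eVariationOn g (Icc b c) := by
  have := eVariationOn.Icc_add_Icc g (s := (univ : Set ℝ)) hab hbc (mem_univ b)
  simpa using this.symm

theorem var_piece (g f : ℝ → M) (φ : ℝ → ℝ) {a b : ℝ}
    (heq : EqOn g (f ∘ φ) (Icc a b))
    (hm : MonotoneOn φ (Icc a b) ∨ AntitoneOn φ (Icc a b))
    (hmaps : MapsTo φ (Icc a b) (Icc 0 1)) :
    eVariationOn g (Icc a b) ≤ eVariationOn f (Icc 0 1) := by
  rw [eVariationOn.eq_of_eqOn heq]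
  exact hm.elim (fun h => eVariationOn.comp_le_of_monotoneOn f φ h hmaps)
    (fun h => eVariationOn.comp_le_of_antitoneOn f φ h hmaps)

section Key

variable (γ : ℝ → M) (H : ℝ → ℝ → M) (p q : M) (W : ℝ)
variable (hγc : Continuous γ) (hper : Function.Periodic γ 1) (hγ0 : γ 0 = p)
variable (hHc : Continuous (Function.uncurry H)) (hHper : ∀ s, Function.Periodic (fun t => H t s) 1)
variable (hH0 : ∀ t, H t 0 = γ t) (hH1 : ∀ t, H t 1 = q)
variable (hwid : ∀ a ∈ Icc (0:ℝ) 1, eVariationOn (H a) (Icc 0 1) ≤ ENNReal.ofReal W)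

include hper hγ0 hH0 in
theorem phAB (t : ℝ) : phA γ t 1 = phB γ H t 0 := by
  have hγ1 : γ 1 = p := by simpa using hper 0 |>.trans hγ0
  have hq0 : H 0 0 = p := (hH0 0).trans hγ0
  simp only [phA, phB, clampI_one, clampI_zero, zero_mul, one_mul, sub_self, zero_add]
  split_ifs with h1 h2
  · rw [min_eq_left (by linarith)]
  · rw [min_eq_right (by linarith), hq0, hγ1]
  · rw [min_eq_right (by linarith), hq0, hγ1]

include hHper in
theorem phBC (t : ℝ) : phB γ H t 1 = phC γ H t 0 := by
  have h10 : ∀ x, H 1 x = H 0 x := fun x => by simpa using (hHper x) 0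
  simp only [phB, phC, clampI_one, clampI_zero, one_mul, sub_self, sub_zero]
  split_ifs with h1 h2 <;> simp [h10]

include hγ0 in
theorem phCD (t : ℝ) : phC γ H t 1 = phD H p t 0 := by
  simp only [phC, phD, clampI_one, clampI_zero, sub_self, zero_mul, sub_zero, one_mul]
  split_ifs with h1 h2 <;> simp [hγ0]

include hγc hper hγ0 hHc hHper hH0 hH1 in
theorem contBigK : Continuous (fun x : ℝ × ℝ => bigK γ H p x.1 x.2) := by
  have hγ1 : γ 1 = p := by simpa using hper 0 |>.trans hγ0
  have hq0 : H 0 0 = p := (hH0 0).trans hγ0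
  have cH : ∀ (a b : ℝ × ℝ → ℝ), Continuous a → Continuous b →
      Continuous (fun x => H (a x) (b x)) := fun a b ha hb => hHc.comp (ha.prodMk hb)
  have contA : Continuous (fun x : ℝ × ℝ => phA γ x.1 x.2) := by
    unfold phA; exact hγc.comp (by fun_prop)
  have contB : Continuous (fun x : ℝ × ℝ => phB γ H x.1 x.2) := by
    unfold phB
    refine Continuous.if_le ?_ ?_ continuous_fst continuous_const ?_
    · exact hγc.comp (by fun_prop)
    · refine Continuous.if_le ?_ ?_ continuous_fst continuous_const ?_
      · exact cH _ _ continuous_const (by fun_prop)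
      · exact cH _ _ continuous_const (by fun_prop)
      · intro x hx; rw [hx]; norm_num
    · intro x hx; rw [hx]
      rw [if_pos (by norm_num : (1:ℝ)/3 ≤ 2/3)]
      norm_num
      rw [hq0, hγ1]
  have contC : Continuous (fun x : ℝ × ℝ => phC γ H x.1 x.2) := by
    unfold phC
    refine Continuous.if_le ?_ ?_ continuous_fst continuous_const ?_
    · exact hγc.comp (by fun_prop)
    · refine Continuous.if_le ?_ ?_ continuous_fst continuous_const ?_
      · exact cH _ _ (by fun_prop) (by fun_prop)
      · exact cH _ _ continuous_const (by fun_prop)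
      · intro x hx; rw [hx]; norm_num
        rw [hH1, hH1]
    · intro x hx; rw [hx]
      rw [if_pos (by norm_num : (1:ℝ)/3 ≤ 2/3)]
      norm_num
      rw [hH0]
  have contD : Continuous (fun x : ℝ × ℝ => phD H p x.1 x.2) := by
    unfold phD
    refine Continuous.if_le ?_ ?_ continuous_fst continuous_const ?_
    · exact continuous_const
    · refine Continuous.if_le ?_ ?_ continuous_fst continuous_const ?_
      · exact cH _ _ continuous_const (by fun_prop)
      · exact cH _ _ continuous_const (by fun_prop)
      · intro x hx; rw [hx]; norm_num
    · intro x hx; rw [hx]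
      rw [if_pos (by norm_num : (1:ℝ)/3 ≤ 2/3)]
      norm_num
      rw [hq0]
  unfold bigK
  refine Continuous.if_le ?_ ?_ continuous_snd continuous_const ?_
  · refine Continuous.if_le ?_ ?_ continuous_snd continuous_const ?_
    · show Continuous ((fun x : ℝ × ℝ => phA γ x.1 x.2) ∘ (fun x : ℝ × ℝ => (x.1, 4*x.2)))
      exact contA.comp (by fun_prop)
    · show Continuous ((fun x : ℝ × ℝ => phB γ H x.1 x.2) ∘ (fun x : ℝ × ℝ => (x.1, 4*x.2-1)))
      exact contB.comp (by fun_prop)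
    · intro x hx; rw [hx]; norm_num
      exact phAB γ H p hper hγ0 hH0 x.1
  · refine Continuous.if_le ?_ ?_ continuous_snd continuous_const ?_
    · show Continuous ((fun x : ℝ × ℝ => phC γ H x.1 x.2) ∘ (fun x : ℝ × ℝ => (x.1, 4*x.2-2)))
      exact contC.comp (by fun_prop)
    · show Continuous ((fun x : ℝ × ℝ => phD H p x.1 x.2) ∘ (fun x : ℝ × ℝ => (x.1, 4*x.2-3)))
      exact contD.comp (by fun_prop)
    · intro x hx; rw [hx]; norm_num
      exact phCD γ H p hγ0 x.1
  · intro x hx; rw [hx]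
    rw [if_neg (by norm_num : ¬ ((1:ℝ)/2 ≤ 1/4)), if_pos (by norm_num : (1:ℝ)/2 ≤ 3/4)]
    norm_num
    exact phBC γ H hHper x.1

include hγ0 hH0 in
theorem bigK_zero (s : ℝ) : bigK γ H p 0 s = p := by
  have hq0 : H 0 0 = p := by rw [hH0 0, hγ0]
  have hA : ∀ c, phA γ 0 c = p := by
    intro c
    unfold phA
    rw [show ((1 - clampI c) * 0 + clampI c * min (3*(0:ℝ)) 1) = 0 by
      norm_num [min_def], hγ0]
  have hB : ∀ c, phB γ H 0 c = p := by
    intro c; unfold phB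
    rw [if_pos (by norm_num : (0:ℝ) ≤ 1/3), show ((3:ℝ) * 0) = 0 by ring, hγ0]
  have hC : ∀ c, phC γ H 0 c = p := by
    intro c; unfold phC
    rw [if_pos (by norm_num : (0:ℝ) ≤ 1/3),
      show ((1 - clampI c) * (3*(0:ℝ))) = 0 by ring, hγ0]
  have hD : ∀ c, phD H p 0 c = p := by
    intro c; unfold phD
    rw [if_pos (by norm_num : (0:ℝ) ≤ 1/3)]
  unfold bigK
  split_ifs <;> simp [hA, hB, hC, hD]

include hper hγ0 hH0 in
theorem bigK_one (s : ℝ) : bigK γ H p 1 s = p := by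
  have hγ1 : γ 1 = p := by simpa using hper 0 |>.trans hγ0
  have hq0 : H 0 0 = p := by rw [hH0 0, hγ0]
  have hA : ∀ c, phA γ 1 c = p := by
    intro c; unfold phA
    rw [show ((1 - clampI c) * 1 + clampI c * min (3*(1:ℝ)) 1) = 1 by
      norm_num [min_def], hγ1]
  have hB : ∀ c, phB γ H 1 c = p := by
    intro c; unfold phB
    rw [if_neg (by norm_num : ¬ ((1:ℝ) ≤ 1/3)), if_neg (by norm_num : ¬ ((1:ℝ) ≤ 2/3)),
      show (clampI c * (3 - 3*(1:ℝ))) = 0 by ring, hq0]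
  have hC : ∀ c, phC γ H 1 c = p := by
    intro c; unfold phC
    rw [if_neg (by norm_num : ¬ ((1:ℝ) ≤ 1/3)), if_neg (by norm_num : ¬ ((1:ℝ) ≤ 2/3)),
      show ((3:ℝ) - 3*1) = 0 by ring, hq0]
  have hD : ∀ c, phD H p 1 c = p := by
    intro c; unfold phD
    rw [if_neg (by norm_num : ¬ ((1:ℝ) ≤ 1/3)), if_neg (by norm_num : ¬ ((1:ℝ) ≤ 2/3)),
      show ((1 - clampI c) * (3 - 3*(1:ℝ))) = 0 by ring, hq0]
  unfold bigK
  split_ifs <;> simp [hA, hB, hC, hD]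

theorem bigK_t0 (t : ℝ) : bigK γ H p t 0 = γ t := by
  unfold bigK phA
  rw [if_pos (by norm_num : (0:ℝ) ≤ 1/2), if_pos (by norm_num : (0:ℝ) ≤ 1/4)]
  norm_num

include hγ0 hH0 in
theorem bigK_t1 (t : ℝ) : bigK γ H p t 1 = p := by
  have hq0 : H 0 0 = p := by rw [hH0 0, hγ0]
  unfold bigK
  rw [if_neg (by norm_num : ¬ ((1:ℝ) ≤ 1/2)), if_neg (by norm_num : ¬ ((1:ℝ) ≤ 3/4))]
  unfold phD
  have h1 : clampI (4 * (1:ℝ) - 3) = 1 := by norm_num [clampI]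
  rw [h1]
  split_ifs with h2 h3
  · rfl
  · rw [show ((1:ℝ) - 1) * (3*t - 1) = 0 by ring, hq0]
  · rw [show ((1:ℝ) - 1) * (3 - 3*t) = 0 by ring, hq0]


include hγc hper hγ0 hHc hHper hH0 hH1 in
theorem contFinK : Continuous (Function.uncurry (finK γ H p)) := by
  have contK := contBigK γ H p q hγc hper hγ0 hHc hHper hH0 hH1
  have h1 : Continuous (fun st : ℝ × ℝ => bigK γ H p (Int.fract st.2) st.1) := by
    apply ContinuousOn.comp_fract' (f := fun s t => bigK γ H p t s)
    · have hc : Continuous (fun x : ℝ × ℝ => bigK γ H p x.2 x.1) := by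
        show Continuous ((fun y : ℝ × ℝ => bigK γ H p y.1 y.2) ∘ Prod.swap)
        exact contK.comp continuous_swap
      exact hc.continuousOn
    · intro s
      exact (bigK_zero γ H p hγ0 hH0 s).trans (bigK_one γ H p hper hγ0 hH0 s).symm
  show Continuous ((fun st : ℝ × ℝ => bigK γ H p (Int.fract st.2) st.1) ∘ Prod.swap)
  exact h1.comp continuous_swap

theorem finK_per (s : ℝ) : Function.Periodic (fun t => finK γ H p t s) 1 := by
  intro t; simp only [finK, Int.fract_add_one]

include hper in
theorem finK_t0 (t : ℝ) : finK γ H p t 0 = γ t := by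
  rw [finK, bigK_t0]
  rw [← Int.self_sub_floor t]
  simpa using hper.sub_int_mul_eq (x := t) ⌊t⌋

include hγ0 hH0 in
theorem finK_t1 (t : ℝ) : finK γ H p t 1 = p := bigK_t1 γ H p hγ0 hH0 _

include hγ0 hH0 in
theorem finK_0s (s : ℝ) : finK γ H p 0 s = p := by
  rw [finK, Int.fract_zero]; exact bigK_zero γ H p hγ0 hH0 s

theorem varA (c : ℝ) :
    eVariationOn (fun t => phA γ t c) (Icc 0 1) ≤ eVariationOn γ (Icc 0 1) := by
  obtain ⟨hc0, hc1⟩ := clampI_mem c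
  refine var_piece _ γ (fun t => (1 - clampI c) * t + clampI c * min (3*t) 1)
    (fun t _ => rfl) (Or.inl ?_) ?_
  · intro x hx y hy hxy
    have hmin : min (3*x) 1 ≤ min (3*y) 1 := min_le_min (by linarith) le_rfl
    have h1 : (1 - clampI c) * x ≤ (1 - clampI c) * y := by nlinarith
    have h2 : clampI c * min (3*x) 1 ≤ clampI c * min (3*y) 1 := by nlinarith
    dsimp only; linarith
  · intro t ht
    simp only [mem_Icc] at ht ⊢
    have h0 : (0:ℝ) ≤ min (3*t) 1 := le_min (by linarith [ht.1]) (by norm_num)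
    have h1 : min (3*t) 1 ≤ 1 := min_le_right _ _
    constructor
    · nlinarith [ht.1]
    · nlinarith [ht.2]

include hper hγ0 hH0 hwid in
theorem varB (c : ℝ) : eVariationOn (fun t => phB γ H t c) (Icc 0 1) ≤
    eVariationOn γ (Icc 0 1) + (ENNReal.ofReal W + ENNReal.ofReal W) := by
  have hγ1 : γ 1 = p := by simpa using hper 0 |>.trans hγ0
  have hq0 : H 0 0 = p := by rw [hH0 0, hγ0]
  obtain ⟨hc0, hc1⟩ := clampI_mem c
  rw [Icc_split (fun t => phB γ H t c) (by norm_num : (0:ℝ) ≤ 1/3) (by norm_num : (1/3:ℝ) ≤ 1),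
      Icc_split (fun t => phB γ H t c) (by norm_num : (1/3:ℝ) ≤ 2/3) (by norm_num : (2/3:ℝ) ≤ 1)]
  refine add_le_add ?_ (add_le_add ?_ ?_)
  · refine var_piece _ γ (fun t => 3*t) ?_ (Or.inl ?_) ?_
    · intro t ht
      show phB γ H t c = γ (3*t)
      unfold phB
      rw [if_pos ht.2]
    · intro x hx y hy hxy; dsimp only; linarith
    · intro t ht; simp only [mem_Icc] at ht ⊢
      constructor
      · linarith [ht.1]
      · linarith [ht.2]
  · refine le_trans (var_piece _ (H 0) (fun t => clampI c * (3*t-1)) ?_ (Or.inl ?_) ?_)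
      (hwid 0 (by norm_num))
    · intro t ht
      show phB γ H t c = H 0 (clampI c * (3*t-1))
      rcases eq_or_lt_of_le ht.1 with h | h
      · rw [← h]
        rw [show (clampI c * (3*(1/3:ℝ)-1)) = 0 by norm_num, hq0]
        unfold phB
        rw [if_pos le_rfl, show (3*(1/3:ℝ)) = 1 by norm_num, hγ1]
      · unfold phB
        rw [if_neg (not_le.2 h), if_pos ht.2]
    · intro x hx y hy hxy; dsimp only; nlinarith
    · intro t ht; simp only [mem_Icc] at ht ⊢
      constructor
      · exact mul_nonneg hc0 (by linarith [ht.1])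
      · nlinarith [ht.2]
  · refine le_trans (var_piece _ (H 0) (fun t => clampI c * (3-3*t)) ?_ (Or.inr ?_) ?_)
      (hwid 0 (by norm_num))
    · intro t ht
      show phB γ H t c = H 0 (clampI c * (3-3*t))
      rcases eq_or_lt_of_le ht.1 with h | h
      · rw [← h]
        unfold phB
        rw [if_neg (by norm_num : ¬ ((2:ℝ)/3 ≤ 1/3)), if_pos le_rfl]
        norm_num
      · unfold phB
        rw [if_neg (not_le.2 (by linarith : (1:ℝ)/3 < t)), if_neg (not_le.2 h)]
    · intro x hx y hy hxy; dsimp only; nlinarith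
    · intro t ht; simp only [mem_Icc] at ht ⊢
      constructor
      · exact mul_nonneg hc0 (by linarith [ht.2])
      · nlinarith [ht.1]

include hH0 hH1 hwid in
theorem varC (c : ℝ) : eVariationOn (fun t => phC γ H t c) (Icc 0 1) ≤
    eVariationOn γ (Icc 0 1) + (ENNReal.ofReal W + ENNReal.ofReal W) := by
  obtain ⟨hc0, hc1⟩ := clampI_mem c
  rw [Icc_split (fun t => phC γ H t c) (by norm_num : (0:ℝ) ≤ 1/3) (by norm_num : (1/3:ℝ) ≤ 1),
      Icc_split (fun t => phC γ H t c) (by norm_num : (1/3:ℝ) ≤ 2/3) (by norm_num : (2/3:ℝ) ≤ 1)]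
  refine add_le_add ?_ (add_le_add ?_ ?_)
  · refine var_piece _ γ (fun t => (1 - clampI c) * (3*t)) ?_ (Or.inl ?_) ?_
    · intro t ht
      show phC γ H t c = γ ((1 - clampI c) * (3*t))
      unfold phC
      rw [if_pos ht.2]
    · intro x hx y hy hxy; dsimp only; nlinarith
    · intro t ht; simp only [mem_Icc] at ht ⊢
      constructor
      · have := ht.1; nlinarith
      · have := ht.2; nlinarith
  · refine le_trans (var_piece _ (H (1 - clampI c)) (fun t => 3*t-1) ?_ (Or.inl ?_) ?_)
      (hwid (1 - clampI c) ⟨by linarith, by linarith⟩)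
    · intro t ht
      show phC γ H t c = H (1 - clampI c) (3*t-1)
      rcases eq_or_lt_of_le ht.1 with h | h
      · rw [← h]
        rw [show (3*(1/3:ℝ)-1) = 0 by norm_num, hH0]
        unfold phC
        rw [if_pos le_rfl, show (3*(1/3:ℝ)) = 1 by norm_num, mul_one]
      · unfold phC
        rw [if_neg (not_le.2 h), if_pos ht.2]
    · intro x hx y hy hxy; dsimp only; linarith
    · intro t ht; simp only [mem_Icc] at ht ⊢
      constructor
      · linarith [ht.1]
      · linarith [ht.2]
  · refine le_trans (var_piece _ (H 0) (fun t => 3-3*t) ?_ (Or.inr ?_) ?_)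
      (hwid 0 (by norm_num))
    · intro t ht
      show phC γ H t c = H 0 (3-3*t)
      rcases eq_or_lt_of_le ht.1 with h | h
      · rw [← h]
        unfold phC
        rw [if_neg (by norm_num : ¬ ((2:ℝ)/3 ≤ 1/3)), if_pos le_rfl,
          show (3*(2/3:ℝ)-1) = 1 by norm_num, show (3-3*(2/3:ℝ)) = 1 by norm_num, hH1, hH1]
      · unfold phC
        rw [if_neg (not_le.2 (by linarith : (1:ℝ)/3 < t)), if_neg (not_le.2 h)]
    · intro x hx y hy hxy; dsimp only; linarith
    · intro t ht; simp only [mem_Icc] at ht ⊢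
      constructor
      · linarith [ht.2]
      · linarith [ht.1]

include hγ0 hH0 hwid in
theorem varD (c : ℝ) : eVariationOn (fun t => phD H p t c) (Icc 0 1) ≤
    eVariationOn γ (Icc 0 1) + (ENNReal.ofReal W + ENNReal.ofReal W) := by
  have hq0 : H 0 0 = p := by rw [hH0 0, hγ0]
  obtain ⟨hc0, hc1⟩ := clampI_mem c
  rw [Icc_split (fun t => phD H p t c) (by norm_num : (0:ℝ) ≤ 1/3) (by norm_num : (1/3:ℝ) ≤ 1),
      Icc_split (fun t => phD H p t c) (by norm_num : (1/3:ℝ) ≤ 2/3) (by norm_num : (2/3:ℝ) ≤ 1)]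
  refine add_le_add ?_ (add_le_add ?_ ?_)
  · have h1 : eVariationOn (fun t => phD H p t c) (Icc 0 (1/3)) = 0 := by
      apply eVariationOn.constant_on
      rintro x ⟨t, ht, rfl⟩ y ⟨u, hu, rfl⟩
      simp only [phD]
      rw [if_pos ht.2, if_pos hu.2]
    exact h1.le.trans (zero_le)
  · refine le_trans (var_piece _ (H 0) (fun t => (1 - clampI c) * (3*t-1)) ?_ (Or.inl ?_) ?_)
      (hwid 0 (by norm_num))
    · intro t ht
      show phD H p t c = H 0 ((1 - clampI c) * (3*t-1))
      rcases eq_or_lt_of_le ht.1 with h | h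
      · rw [← h]
        rw [show ((1 - clampI c) * (3*(1/3:ℝ)-1)) = 0 by norm_num, hq0]
        unfold phD
        rw [if_pos le_rfl]
      · unfold phD
        rw [if_neg (not_le.2 h), if_pos ht.2]
    · intro x hx y hy hxy; dsimp only; nlinarith
    · intro t ht; simp only [mem_Icc] at ht ⊢
      constructor
      · exact mul_nonneg (by linarith) (by linarith [ht.1])
      · nlinarith [ht.2]
  · refine le_trans (var_piece _ (H 0) (fun t => (1 - clampI c) * (3-3*t)) ?_ (Or.inr ?_) ?_)
      (hwid 0 (by norm_num))
    · intro t ht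
      show phD H p t c = H 0 ((1 - clampI c) * (3-3*t))
      rcases eq_or_lt_of_le ht.1 with h | h
      · rw [← h]
        unfold phD
        rw [if_neg (by norm_num : ¬ ((2:ℝ)/3 ≤ 1/3)), if_pos le_rfl]
        norm_num
      · unfold phD
        rw [if_neg (not_le.2 (by linarith : (1:ℝ)/3 < t)), if_neg (not_le.2 h)]
    · intro x hx y hy hxy; dsimp only; nlinarith
    · intro t ht; simp only [mem_Icc] at ht ⊢
      constructor
      · exact mul_nonneg (by linarith) (by linarith [ht.2])
      · nlinarith [ht.1]

include hper hγ0 hH0 hH1 hwid in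
theorem finK_var (s : ℝ) : eVariationOn (fun t => finK γ H p t s) (Icc 0 1) ≤
    eVariationOn γ (Icc 0 1) + (ENNReal.ofReal W + ENNReal.ofReal W) := by
  have heq : EqOn (fun t => finK γ H p t s) (fun t => bigK γ H p t s) (Icc 0 1) := by
    intro t ht
    rcases lt_or_eq_of_le ht.2 with h | h
    · show bigK γ H p (Int.fract t) s = bigK γ H p t s
      rw [Int.fract_eq_self.2 ⟨ht.1, h⟩]
    · show bigK γ H p (Int.fract t) s = bigK γ H p t s
      rw [h, Int.fract_one, bigK_zero γ H p hγ0 hH0, bigK_one γ H p hper hγ0 hH0]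
  rw [eVariationOn.eq_of_eqOn heq]
  rcases le_or_gt s (1/2) with h12 | h12
  · rcases le_or_gt s (1/4) with h14 | h14
    · have hb : (fun t => bigK γ H p t s) = fun t => phA γ t (4*s) := by
        funext t; simp only [bigK, if_pos h12, if_pos h14]
      rw [hb]
      exact (varA γ (4*s)).trans le_self_add
    · have hb : (fun t => bigK γ H p t s) = fun t => phB γ H t (4*s-1) := by
        funext t; simp only [bigK, if_pos h12, if_neg (not_le.2 h14)]
      rw [hb]
      exact varB γ H p W hper hγ0 hH0 hwid (4*s-1)
  · rcases le_or_gt s (3/4) with h34 | h34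
    · have hb : (fun t => bigK γ H p t s) = fun t => phC γ H t (4*s-2) := by
        funext t; simp only [bigK, if_neg (not_le.2 h12), if_pos h34]
      rw [hb]
      exact varC γ H q W hH0 hH1 hwid (4*s-2)
    · have hb : (fun t => bigK γ H p t s) = fun t => phD H p t (4*s-3) := by
        funext t; simp only [bigK, if_neg (not_le.2 h12), if_neg (not_le.2 h34)]
      rw [hb]
      exact varD γ H p W hγ0 hH0 hwid (4*s-3)

end Key
end SlitAux

/-- If `M` is a compact Riemannian manifold of diameter `≤ D` and every
closed curve of length `≤ L` admits a contraction of width `≤ W`, then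
`S_p(M, L) ≤ max {2L, 2W + 2D}`. -/
theorem depth_bound_of_contraction_width
    (n : ℕ) (M : Type) [MetricSpace M] [CompactSpace M] [Nonempty M]
    [ChartedSpace (EuclideanSpace ℝ (Fin n)) M] [IsManifold (𝓡 n) (⊤ : ℕ∞) M]
    (D : ℝ) (hD : Metric.diam (Set.univ : Set M) ≤ D)
    (p : M) (L W : ℝ) (hL : 0 < L) (hW : 0 < W)
    (hcon : ∀ γ : ℝ → M, IsLoop γ → loopLen γ ≤ ENNReal.ofReal L →
      ∃ H : ℝ → ℝ → M, IsContraction H γ ∧ homWidth H ≤ ENNReal.ofReal W) :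
    depthSup p L ≤ ENNReal.ofReal (max (2 * L) (2 * W + 2 * D)) := by
  have hD0 : (0:ℝ) ≤ D := le_trans Metric.diam_nonneg hD
  unfold depthSup
  refine iSup₂_le fun γ hγ => ?_
  obtain ⟨⟨⟨hγc, hγper⟩, hγ0⟩, hlen⟩ := hγ
  obtain ⟨H, hcontr, hwidth⟩ := hcon γ ⟨hγc, hγper⟩ hlen
  obtain ⟨q, hHc, hHper, hH0, hH1⟩ := hcontr
  have hH1' : ∀ t, H t 1 = q := hH1
  have hwid : ∀ a ∈ Set.Icc (0:ℝ) 1, eVariationOn (H a) (Set.Icc 0 1) ≤ ENNReal.ofReal W := by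
    intro a ha
    exact le_trans
      (le_iSup₂ (f := fun t (_ : t ∈ Set.Icc (0:ℝ) 1) => eVariationOn (H t) (Set.Icc 0 1)) a ha)
      hwidth
  have hbased : IsBasedHomotopy p (finK γ H p) γ (fun _ => p) :=
    ⟨⟨contFinK γ H p q hγc hγper hγ0 hHc hHper hH0 hH1',
      finK_per γ H p, fun t => finK_t0 γ H p hγper t, fun t => finK_t1 γ H p hγ0 hH0 t⟩,
      fun s => finK_0s γ H p hγ0 hH0 s⟩
  have hvar : ∀ s ∈ Set.Icc (0:ℝ) 1, eVariationOn (fun t => finK γ H p t s) (Set.Icc 0 1) ≤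
      loopLen γ + ENNReal.ofReal (max (2*L) (2*W+2*D)) := by
    intro s _
    refine le_trans (finK_var γ H p q W hγper hγ0 hH0 hH1' hwid s) ?_
    refine add_le_add le_rfl ?_
    rw [← ENNReal.ofReal_add hW.le hW.le]
    exact ENNReal.ofReal_le_ofReal (le_max_of_le_right (by linarith))
  unfold loopDepth
  exact iInf₂_le _ ⟨finK γ H p, hbased, hvar⟩
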